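/- For a state ω on a unital C*-algebra A, left multiplication descends to the quotient: for each a ∈ A the map π_ω(a) : b + I_ω ↦ ab + I_ω is a well-defined linear operator on A / I_ω, bounded with operator norm at most ‖a‖, and a ↦ π_ω(a) is a *-homomorphism. -/

import Mathlib

open scoped ComplexOrder

/-- For a state `ω` on a unital C*-algebra `A`, left multiplication descends to the
quotient `A / I_ω` by the Gel'fand ideal `I_ω = {c : ω(c*c) = 0}`:  for each `a ∈ A` the
map `π_ω(a) : b + I_ω ↦ ab + I_ω` is well defined and linear, bounded with norm at most
`‖a‖` with respect to the GNS inner product `⟨b + I_ω, c + I_ω⟩ = ω(b*c)`, and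
`a ↦ π_ω(a)` is a *-homomorphism. -/
theorem gns_left_multiplication_descends
    {A : Type*} [NormedRing A] [StarRing A] [CStarRing A] [CompleteSpace A]
    [NormedAlgebra ℂ A] [StarModule ℂ A]
    (ω : A →L[ℂ] ℂ) (hpos : ∀ a : A, 0 ≤ ω (star a * a)) (hone : ω 1 = 1) :
    -- well-definedness: `I_ω` is mapped into itself by left multiplication, so
    -- `b + I_ω ↦ a b + I_ω` is independent of the representative
    (∀ a b b' : A, ω (star (b - b') * (b - b')) = 0 →
        ω (star (a * b - a * b') * (a * b - a * b')) = 0) ∧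
    -- linearity in the argument (on representatives)
    (∀ a b b' : A, ∀ z : ℂ, a * (b + z • b') = a * b + z • (a * b')) ∧
    -- boundedness: ‖π_ω(a) (b + I_ω)‖² ≤ ‖a‖² ‖b + I_ω‖² in the GNS inner product
    (∀ a b : A, ω (star (a * b) * (a * b)) ≤ (‖a‖ : ℂ) ^ 2 * ω (star b * b)) ∧
    -- multiplicativity: π_ω(a a') = π_ω(a) π_ω(a')
    (∀ a a' b : A, (a * a') * b = a * (a' * b)) ∧
    -- unitality: π_ω(1) = id
    (∀ b : A, (1 : A) * b = b) ∧
    -- star condition: ⟨π_ω(a) b, c⟩ = ⟨b, π_ω(star a) c⟩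
    (∀ a b c : A, ω (star (a * b) * c) = ω (star b * (star a * c))) := by
  letI : CStarAlgebra A := ⟨⟩
  letI := CStarAlgebra.spectralOrder A
  letI := CStarAlgebra.spectralOrderedRing A
  -- ω is nonnegative on nonnegative elements
  have hnn : ∀ x : A, 0 ≤ x → 0 ≤ ω x := by
    intro x hx
    have hs : CFC.sqrt x * CFC.sqrt x = x := CFC.sqrt_mul_sqrt_self x hx
    have hsa : IsSelfAdjoint (CFC.sqrt x) :=
      IsSelfAdjoint.of_nonneg (CFC.sqrt_nonneg x)
    have := hpos (CFC.sqrt x)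
    rwa [hsa.star_eq, hs] at this
  -- ω is monotone
  have hmono : ∀ x y : A, x ≤ y → ω x ≤ ω y := by
    intro x y hxy
    have := hnn (y - x) (sub_nonneg.mpr hxy)
    rw [map_sub] at this
    exact sub_nonneg.mp this
  -- the boundedness estimate
  have hbdd : ∀ a b : A, ω (star (a * b) * (a * b)) ≤ (‖a‖ : ℂ) ^ 2 * ω (star b * b) := by
    intro a b
    have key : star (a * b) * (a * b) ≤ ‖star a * a‖ • (star b * b) := by
      have h := CStarAlgebra.star_left_conjugate_le_norm_smul (a := b) (b := star a * a)
        (hb := IsSelfAdjoint.star_mul_self a)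
      calc star (a * b) * (a * b) = star b * (star a * a) * b := by
            simp [star_mul, mul_assoc]
        _ ≤ ‖star a * a‖ • (star b * b) := h
    have := hmono _ _ key
    rw [show (‖star a * a‖ : ℝ) • (star b * b) = ((‖star a * a‖ : ℝ) : ℂ) • (star b * b) from
        (Complex.coe_smul _ _).symm, map_smul, smul_eq_mul,
      CStarRing.norm_star_mul_self] at this
    rwa [show ((‖a‖ * ‖a‖ : ℝ) : ℂ) = (‖a‖ : ℂ) ^ 2 by push_cast; ring] at this
  refine ⟨?_, ?_, hbdd, ?_, ?_, ?_⟩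
  · intro a b b' h
    have h1 : a * b - a * b' = a * (b - b') := (mul_sub a b b').symm
    have h2 := hbdd a (b - b')
    rw [← h1, h, mul_zero] at h2
    have h3 := hpos (a * b - a * b')
    exact le_antisymm h2 h3
  · intro a b b' z; simp [mul_add, mul_smul_comm]
  · intro a a' b; rw [mul_assoc]
  · intro b; rw [one_mul]
  · intro a b c; simp [star_mul, mul_assoc]
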